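/- arXiv:1907.04726 — 9 statements merged into one kernel-verified Lean document; each statement's English description precedes it below -/
import Mathlib

section
/- If X ∈ M_n(ℝ) is symmetric with det X > 0 and X² = F Fᵀ for some F ∈ GL⁺(n,ℝ), then R := X F^{−T} satisfies R ∈ SO(n) and (μ−μ_c)(F Rᵀ F Rᵀ − R Fᵀ R Fᵀ) = 2μ(F Rᵀ − R Fᵀ) for all μ, μ_c ∈ ℝ; i.e., R is a critical point of the Cosserat energy. -/
open Matrix

theorem stmt6 (n : ℕ) (F X : Matrix (Fin n) (Fin n) ℝ)
    (hF : 0 < F.det) (hXsym : Xᵀ = X) (hXdet : 0 < X.det)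
    (hXX : X * X = F * Fᵀ) :
    (X * (Fᵀ)⁻¹)ᵀ * (X * (Fᵀ)⁻¹) = 1 ∧ (X * (Fᵀ)⁻¹).det = 1 ∧
    ∀ μ μc : ℝ,
      (μ - μc) • (F * (X * (Fᵀ)⁻¹)ᵀ * F * (X * (Fᵀ)⁻¹)ᵀ
          - (X * (Fᵀ)⁻¹) * Fᵀ * (X * (Fᵀ)⁻¹) * Fᵀ) =
        (2 * μ) • (F * (X * (Fᵀ)⁻¹)ᵀ - (X * (Fᵀ)⁻¹) * Fᵀ) := by
  have hFu : IsUnit F.det := (ne_of_gt hF).isUnit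
  have hFTu : IsUnit Fᵀ.det := by rwa [Matrix.det_transpose]
  have hRT : (X * (Fᵀ)⁻¹)ᵀ = F⁻¹ * X := by
    rw [Matrix.transpose_mul, hXsym, Matrix.transpose_nonsing_inv,
      Matrix.transpose_transpose]
  have hFRT : F * (X * (Fᵀ)⁻¹)ᵀ = X := by
    rw [hRT, ← mul_assoc, Matrix.mul_nonsing_inv F hFu, one_mul]
  have hRFT : (X * (Fᵀ)⁻¹) * Fᵀ = X := by
    rw [mul_assoc, Matrix.nonsing_inv_mul Fᵀ hFTu, mul_one]
  refine ⟨?_, ?_, ?_⟩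
  · rw [hRT]
    calc F⁻¹ * X * (X * (Fᵀ)⁻¹) = F⁻¹ * (X * X) * (Fᵀ)⁻¹ := by
          rw [mul_assoc, mul_assoc, mul_assoc]
      _ = F⁻¹ * (F * Fᵀ) * (Fᵀ)⁻¹ := by rw [hXX]
      _ = 1 := by
          rw [← mul_assoc, Matrix.nonsing_inv_mul F hFu, one_mul,
            Matrix.mul_nonsing_inv Fᵀ hFTu]
  · have hdet : X.det = F.det := by
      have h2 : X.det * X.det = F.det * F.det := by
        have := congrArg Matrix.det hXX
        rwa [Matrix.det_mul, Matrix.det_mul, Matrix.det_transpose] at this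
      nlinarith
    rw [Matrix.det_mul, Matrix.det_nonsing_inv, Matrix.det_transpose, hdet]
    exact Ring.mul_inverse_cancel _ hFu
  · intro μ μc
    rw [hFRT, hRFT, sub_self, smul_zero]
    rw [show X * F * (X * (Fᵀ)⁻¹)ᵀ = X * X by rw [mul_assoc, hFRT],
      show X * (X * (Fᵀ)⁻¹) * Fᵀ = X * X by
        rw [mul_assoc, mul_assoc, Matrix.nonsing_inv_mul Fᵀ hFTu, mul_one],
      sub_self, smul_zero]
end

section
/- (SO(2) critical points) Let D = diag(λ₁, λ₂) with λ₁ ≥ λ₂ > 0, and for θ ∈ ℝ let R(θ) be the rotation by angle θ. The function W(θ) = ‖sym(R(θ)ᵀD − I)‖² satisfies: the critical points of W on [0, 2π) are exactly θ = 0, θ = π, and, when λ₁ + λ₂ > 2, additionally the two angles θ with cos θ = 2/(λ₁+λ₂). -/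
open Matrix Real

theorem stmt9 (l1 l2 : ℝ) (hl : l1 ≥ l2) (hl2 : l2 > 0)
    (W : ℝ → ℝ)
    (hW : W = fun θ : ℝ =>
      Matrix.trace
        (((1/2 : ℝ) • (((!![Real.cos θ, -Real.sin θ; Real.sin θ, Real.cos θ])ᵀ *
            !![l1, 0; 0, l2] - 1)
          + ((!![Real.cos θ, -Real.sin θ; Real.sin θ, Real.cos θ])ᵀ *
            !![l1, 0; 0, l2] - 1)ᵀ))ᵀ *
         ((1/2 : ℝ) • (((!![Real.cos θ, -Real.sin θ; Real.sin θ, Real.cos θ])ᵀ *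
            !![l1, 0; 0, l2] - 1)
          + ((!![Real.cos θ, -Real.sin θ; Real.sin θ, Real.cos θ])ᵀ *
            !![l1, 0; 0, l2] - 1)ᵀ))))
    (θ : ℝ) (hθ : θ ∈ Set.Ico 0 (2 * π)) :
    deriv W θ = 0 ↔
      θ = 0 ∨ θ = π ∨ (l1 + l2 > 2 ∧ Real.cos θ = 2 / (l1 + l2)) := by
  have hsum : l1 + l2 > 0 := by linarith
  have hW' : W = fun θ : ℝ =>
      (l1 * Real.cos θ - 1)^2 + (l2 * Real.cos θ - 1)^2
        + (Real.sin θ)^2 * ((l1 - l2)^2 / 2) := by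
    rw [hW]; funext t
    simp [Matrix.trace_fin_two, Matrix.mul_apply, Fin.sum_univ_two,
      Matrix.one_apply, Matrix.transpose_apply, Matrix.vecHead, Matrix.vecTail]
    ring
  have hd : HasDerivAt W
      (-(Real.sin θ) * (l1 + l2) * ((l1 + l2) * Real.cos θ - 2)) θ := by
    rw [hW']
    have hc := Real.hasDerivAt_cos θ
    have hs := Real.hasDerivAt_sin θ
    have h1 := (((hc.const_mul l1).sub_const 1).pow 2).add
        (((hc.const_mul l2).sub_const 1).pow 2) |>.add
        ((hs.pow 2).mul_const ((l1 - l2)^2 / 2))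
    refine h1.congr_deriv ?_
    norm_num
    ring
  rw [hd.deriv]
  have hpi := Real.pi_pos
  constructor
  · intro h
    have h0 : Real.sin θ = 0 ∨ (l1 + l2) * Real.cos θ - 2 = 0 := by
      rcases mul_eq_zero.1 h with h' | h'
      · rcases mul_eq_zero.1 h' with h'' | h''
        · exact Or.inl (by linarith [neg_eq_zero.1 h''])
        · exact absurd h'' hsum.ne'
      · exact Or.inr h'
    rcases h0 with h0 | h0
    · rcases Real.sin_eq_zero_iff.1 h0 with ⟨n, hn⟩
      have hn0 : 0 ≤ n := by
        by_contra hneg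
        push_neg at hneg
        have h1 : n ≤ -1 := by omega
        have : (n : ℝ) ≤ -1 := by exact_mod_cast h1
        nlinarith [hθ.1]
      have hn2 : n < 2 := by
        by_contra hge
        push_neg at hge
        have : (2 : ℝ) ≤ (n : ℝ) := by exact_mod_cast hge
        nlinarith [hθ.2]
      interval_cases n
      · left; simpa using hn.symm
      · right; left; simpa using hn.symm
    · have hc : Real.cos θ = 2 / (l1 + l2) := by
        field_simp; linarith
      by_cases h2 : l1 + l2 > 2
      · exact Or.inr (Or.inr ⟨h2, hc⟩)
      · push_neg at h2
        have hc1 : Real.cos θ = 1 := le_antisymm (Real.cos_le_one θ)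
          (by rw [hc, le_div_iff₀ hsum]; linarith)
        left
        exact (Real.cos_eq_one_iff_of_lt_of_lt (by linarith [hθ.1]) hθ.2).1 hc1
  · rintro (rfl | rfl | ⟨h2, hc⟩)
    · simp
    · simp
    · rw [hc]
      field_simp
      simp
end

section
/- (SO(2) global minimum, case λ₁+λ₂ ≤ 2) Let λ₁ ≥ λ₂ > 0 with λ₁+λ₂ ≤ 2 and D = diag(λ₁,λ₂). Then for every R ∈ SO(2), ‖sym(RᵀD − I)‖² ≥ (λ₁−1)² + (λ₂−1)², with equality iff R = I. -/
set_option maxHeartbeats 1000000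
open Matrix

theorem stmt11 (l1 l2 : ℝ) (hl : l1 ≥ l2) (hl2 : l2 > 0) (hsum : l1 + l2 ≤ 2)
    (W : Matrix (Fin 2) (Fin 2) ℝ → ℝ)
    (hW : W = fun R =>
      Matrix.trace (((1/2 : ℝ) • ((Rᵀ * !![l1, 0; 0, l2] - 1)
          + (Rᵀ * !![l1, 0; 0, l2] - 1)ᵀ))ᵀ *
        ((1/2 : ℝ) • ((Rᵀ * !![l1, 0; 0, l2] - 1)
          + (Rᵀ * !![l1, 0; 0, l2] - 1)ᵀ)))) :
    ∀ R : Matrix (Fin 2) (Fin 2) ℝ, Rᵀ * R = 1 → R.det = 1 →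
      (l1 - 1)^2 + (l2 - 1)^2 ≤ W R ∧
      (W R = (l1 - 1)^2 + (l2 - 1)^2 ↔ R = 1) := by
  subst hW
  intro R hO hD
  have e00 := congrFun (congrFun hO 0) 0
  have e01 := congrFun (congrFun hO 0) 1
  have e11 := congrFun (congrFun hO 1) 1
  simp [Matrix.mul_apply, Fin.sum_univ_two, Matrix.one_apply] at e00 e01 e11
  rw [Matrix.det_fin_two] at hD
  set a := R 0 0 with ha
  set b := R 0 1 with hb
  set c := R 1 0 with hc
  set d := R 1 1 with hd
  have hda : d = a := by linear_combination a*hD + c*e01 - d*e00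
  have hcb : c = -b := by linear_combination d*e01 - c*e11 - b*hD
  have hWval : (fun R : Matrix (Fin 2) (Fin 2) ℝ =>
      Matrix.trace (((1/2 : ℝ) • ((Rᵀ * !![l1, 0; 0, l2] - 1)
          + (Rᵀ * !![l1, 0; 0, l2] - 1)ᵀ))ᵀ *
        ((1/2 : ℝ) • ((Rᵀ * !![l1, 0; 0, l2] - 1)
          + (Rᵀ * !![l1, 0; 0, l2] - 1)ᵀ)))) R
      = (l1*a - 1)^2 + (l2*a - 1)^2 + (1/2)*(b*(l1-l2))^2 := by
    simp [Matrix.trace_fin_two, Matrix.mul_apply, Fin.sum_univ_two, Matrix.one_apply, Matrix.transpose_apply, Matrix.smul_apply, Matrix.add_apply, Matrix.sub_apply, Matrix.vecHead, Matrix.vecTail,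
      ← ha, ← hb, ← hc, ← hd]
    rw [hda, hcb]
    ring
  rw [hWval]
  have hab : a^2 + b^2 = 1 := by linear_combination e11 - (a+d)*hda
  have ha1 : a ≤ 1 := by nlinarith [sq_nonneg b]
  have ham1 : -1 ≤ a := by nlinarith [sq_nonneg b]
  have hlpos : 0 < l1 + l2 := by linarith
  have key : (l1*a - 1)^2 + (l2*a - 1)^2 + 1/2*(b*(l1-l2))^2
      - ((l1 - 1)^2 + (l2 - 1)^2)
      = (1-a) * ((l1+l2) * (2 - (1+a)*(l1+l2)/2)) := by
    have hb2 : b^2 = 1 - a^2 := by linarith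
    rw [mul_pow, hb2]; ring
  clear_value a b c d
  clear hO e00 e01 e11 hD hWval
  constructor
  · nlinarith [mul_nonneg (mul_nonneg (by linarith : (0:ℝ) ≤ 1-a) hlpos.le)
      (by nlinarith : (0:ℝ) ≤ 2 - (1+a)*(l1+l2)/2)]
  · constructor
    · intro hEq
      have hz : (1-a) * ((l1+l2) * (2 - (1+a)*(l1+l2)/2)) = 0 := by
        rw [← key]; linarith
      have haa : a = 1 := by
        by_contra hne
        have h1 : a < 1 := lt_of_le_of_ne ha1 hne
        have h2 : (0:ℝ) < 2 - (1+a)*(l1+l2)/2 := by nlinarith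
        have := mul_pos (mul_pos (by linarith : (0:ℝ) < 1-a) hlpos) h2
        rw [mul_assoc] at this
        linarith
      have hbb : b = 0 := by
        have : b^2 = 0 := by nlinarith
        exact pow_eq_zero_iff (n := 2) (by norm_num) |>.mp this
      ext i j
      fin_cases i <;> fin_cases j <;>
        simp [Matrix.one_apply, ← ha, ← hb, ← hc, ← hd, haa, hbb, hda, hcb]
    · intro hR
      have haa : a = 1 := by rw [ha, hR]; simp
      have hbb : b = 0 := by rw [hb, hR]; simp [Matrix.one_apply]
      rw [haa, hbb]; ring
end

section
/- (SO(2) global minimum, case λ₁+λ₂ > 2) Let λ₁ ≥ λ₂ > 0 with λ₁+λ₂ > 2 and D = diag(λ₁,λ₂). Then for every R ∈ SO(2), ‖sym(RᵀD − I)‖² ≥ (λ₁−λ₂)²/2, with equality exactly for the two rotations R(±θ₀) where cos θ₀ = 2/(λ₁+λ₂). -/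
open Matrix

set_option maxHeartbeats 1000000

theorem stmt12 (l1 l2 : ℝ) (hl : l1 ≥ l2) (hl2 : l2 > 0) (hsum : l1 + l2 > 2)
    (W : Matrix (Fin 2) (Fin 2) ℝ → ℝ)
    (hW : W = fun R =>
      Matrix.trace (((1/2 : ℝ) • ((Rᵀ * !![l1, 0; 0, l2] - 1)
          + (Rᵀ * !![l1, 0; 0, l2] - 1)ᵀ))ᵀ *
        ((1/2 : ℝ) • ((Rᵀ * !![l1, 0; 0, l2] - 1)
          + (Rᵀ * !![l1, 0; 0, l2] - 1)ᵀ))))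
    (c s : ℝ) (hc : c = 2 / (l1 + l2)) (hs : s = Real.sqrt (1 - c^2)) :
    ∀ R : Matrix (Fin 2) (Fin 2) ℝ, Rᵀ * R = 1 → R.det = 1 →
      (l1 - l2)^2 / 2 ≤ W R ∧
      (W R = (l1 - l2)^2 / 2 ↔ (R = !![c, -s; s, c] ∨ R = !![c, s; -s, c])) := by
  intro R hR hdet
  have hsum0 : l1 + l2 > 0 := by linarith
  have hcval : c * (l1 + l2) = 2 := by rw [hc]; field_simp
  have hc1 : c < 1 := by nlinarith
  have hc0 : 0 < c := by nlinarith
  have hs2 : s^2 = 1 - c^2 := by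
    rw [hs]; exact Real.sq_sqrt (by nlinarith)
  have hs0 : 0 ≤ s := hs ▸ Real.sqrt_nonneg _
  -- entry equations from orthogonality and determinant
  have e00 := congrFun (congrFun hR 0) 0
  have e01 := congrFun (congrFun hR 0) 1
  have e11 := congrFun (congrFun hR 1) 1
  simp [Matrix.mul_apply, Fin.sum_univ_two, Matrix.one_apply] at e00 e01 e11
  rw [Matrix.det_fin_two] at hdet
  have h11 : R 1 1 = R 0 0 := by nlinarith [sq_nonneg (R 1 1 - R 0 0)]
  have h01 : R 0 1 = -(R 1 0) := by nlinarith [sq_nonneg (R 0 1 + R 1 0)]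
  -- compute W R
  have hWR : W R = (R 0 0 * l1 - 1)^2 + (R 1 1 * l2 - 1)^2
      + 2 * ((R 0 1 * l1 + R 1 0 * l2)/2)^2 := by
    rw [hW]
    simp [Matrix.trace, Matrix.mul_apply, Fin.sum_univ_two, Matrix.one_apply,
      Matrix.vecHead, Matrix.vecTail]
    ring
  set a := R 0 0 with ha
  set b := R 1 0 with hb
  have hab : a^2 + b^2 = 1 := by linear_combination e00
  have key : W R = (l1 - l2)^2 / 2 + ((l1 + l2) * a - 2)^2 / 2 := by
    rw [hWR, h11, h01]; linear_combination ((l1 - l2)^2/2) * hab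
  constructor
  · rw [key]; linarith [sq_nonneg ((l1 + l2) * a - 2)]
  constructor
  · intro heq
    have ha' : (l1 + l2) * a - 2 = 0 := by
      have : ((l1 + l2) * a - 2)^2 = 0 := by linarith [key ▸ heq]
      exact pow_eq_zero_iff (n := 2) (by norm_num) |>.mp this
    have hac : a = c := by
      have : (l1 + l2) * a = (l1 + l2) * c := by rw [mul_comm (l1+l2) c, hcval]; linarith
      exact mul_left_cancel₀ (by positivity) this
    have hbs : b = s ∨ b = -s := by
      have : (b - s) * (b + s) = 0 := by nlinarith [hab, hs2, hac]
      rcases mul_eq_zero.mp this with h | h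
      · left; linarith
      · right; linarith
    rcases hbs with h | h
    · left
      ext i j
      fin_cases i <;> fin_cases j <;>
        simp [← ha, ← hb, h11, h01, hac, h]
    · right
      ext i j
      fin_cases i <;> fin_cases j <;>
        simp [← ha, ← hb, h11, h01, hac, h]
  · rintro (h | h) <;>
    · have ha' : a = c := by rw [ha, h]; simp
      rw [key, ha', mul_comm (l1+l2) c, hcval]
      norm_num
end

section
/- (SO(2) global maximum) Let λ₁ ≥ λ₂ > 0 and D = diag(λ₁,λ₂). Then for every R ∈ SO(2), ‖sym(RᵀD − I)‖² ≤ (λ₁+1)² + (λ₂+1)², with equality iff R = −I. -/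
open Matrix

set_option maxHeartbeats 1000000 in
theorem stmt13 (l1 l2 : ℝ) (hl : l1 ≥ l2) (hl2 : l2 > 0)
    (W : Matrix (Fin 2) (Fin 2) ℝ → ℝ)
    (hW : W = fun R =>
      Matrix.trace (((1/2 : ℝ) • ((Rᵀ * !![l1, 0; 0, l2] - 1)
          + (Rᵀ * !![l1, 0; 0, l2] - 1)ᵀ))ᵀ *
        ((1/2 : ℝ) • ((Rᵀ * !![l1, 0; 0, l2] - 1)
          + (Rᵀ * !![l1, 0; 0, l2] - 1)ᵀ)))) :
    ∀ R : Matrix (Fin 2) (Fin 2) ℝ, Rᵀ * R = 1 → R.det = 1 →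
      W R ≤ (l1 + 1)^2 + (l2 + 1)^2 ∧
      (W R = (l1 + 1)^2 + (l2 + 1)^2 ↔ R = -1) := by
  intro R hR hdet
  have h00 := congrFun (congrFun hR 0) 0
  have h01 := congrFun (congrFun hR 0) 1
  have h11 := congrFun (congrFun hR 1) 1
  simp [Matrix.mul_apply, Fin.sum_univ_two, Matrix.one_apply] at h00 h01 h11
  rw [Matrix.det_fin_two] at hdet
  have hd : R 1 1 = R 0 0 := by
    linear_combination (R 0 0) * h11 - (R 1 1) * hdet - (R 0 1) * h01
  have hc : R 1 0 = -(R 0 1) := by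
    linear_combination (-(R 1 0)) * h11 + (R 1 1) * h01 + (-(R 0 1)) * hdet
  have hb2 : (R 0 0)^2 + (R 0 1)^2 = 1 := by
    linear_combination h00 + (R 0 1 - R 1 0) * hc
  have hWR : W R = (R 0 0 * l1 - 1)^2 + (R 0 0 * l2 - 1)^2
      + (1 - (R 0 0)^2) * (l1 - l2)^2 / 2 := by
    simp only [hW, Matrix.trace_fin_two, Matrix.mul_apply, Fin.sum_univ_two,
      Matrix.smul_apply, Matrix.add_apply, Matrix.sub_apply, Matrix.transpose_apply,
      Matrix.one_apply]
    norm_num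
    rw [hd, hc]
    linear_combination ((l1 - l2)^2 / 2) * hb2
  have ha1 : -1 ≤ R 0 0 := by nlinarith [sq_nonneg (R 0 1), sq_nonneg (R 0 0 + 1)]
  have ha2 : R 0 0 ≤ 1 := by nlinarith [sq_nonneg (R 0 1), sq_nonneg (R 0 0 - 1)]
  have hB : 0 < (1 - R 0 0) * (l1 + l2)^2 / 2 + 2 * (l1 + l2) := by
    nlinarith [sq_nonneg (l1 + l2)]
  have hdiff : (l1 + 1)^2 + (l2 + 1)^2 - W R
      = (1 + R 0 0) * ((1 - R 0 0) * (l1 + l2)^2 / 2 + 2 * (l1 + l2)) := by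
    rw [hWR]; ring
  constructor
  · linarith [mul_nonneg (by linarith : (0:ℝ) ≤ 1 + R 0 0) hB.le]
  constructor
  · intro hEq
    have h1 : (1 + R 0 0) * ((1 - R 0 0) * (l1 + l2)^2 / 2 + 2 * (l1 + l2)) = 0 := by
      rw [← hdiff, hEq]; ring
    have ha : R 0 0 = -1 := by
      rcases mul_eq_zero.mp h1 with h | h
      · linarith
      · linarith
    have hb : R 0 1 = 0 := by
      have h2 : R 0 1 * R 0 1 = 0 := by nlinarith [hb2]
      exact mul_self_eq_zero.mp h2
    ext i j
    fin_cases i <;> fin_cases j <;>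
      simp [ha, hb, hc, hd, Matrix.one_apply]
  · intro hRI
    have ha : R 0 0 = -1 := by
      have := congrFun (congrFun hRI 0) 0
      simpa using this
    rw [hWR, ha]; ring
end

section
/- (SO(3) critical values comparison, maximum) Let λ₁ ≥ λ₂ ≥ λ₃ > 0 and D = diag(λ₁,λ₂,λ₃). Then for every R ∈ SO(3), ‖sym(RᵀD − I)‖² ≤ (λ₁+1)² + (λ₂+1)² + (λ₃−1)², with equality for R = diag(−1,−1,1). -/
open Matrix

set_option maxHeartbeats 1000000 in
theorem stmt16 (l1 l2 l3 : ℝ) (h12 : l1 ≥ l2) (h23 : l2 ≥ l3) (h3 : l3 > 0)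
    (W : Matrix (Fin 3) (Fin 3) ℝ → ℝ)
    (hW : W = fun R =>
      Matrix.trace (((1/2 : ℝ) • ((Rᵀ * !![l1, 0, 0; 0, l2, 0; 0, 0, l3] - 1)
          + (Rᵀ * !![l1, 0, 0; 0, l2, 0; 0, 0, l3] - 1)ᵀ))ᵀ *
        ((1/2 : ℝ) • ((Rᵀ * !![l1, 0, 0; 0, l2, 0; 0, 0, l3] - 1)
          + (Rᵀ * !![l1, 0, 0; 0, l2, 0; 0, 0, l3] - 1)ᵀ)))) :
    (∀ R : Matrix (Fin 3) (Fin 3) ℝ, Rᵀ * R = 1 → R.det = 1 →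
      W R ≤ (l1 + 1)^2 + (l2 + 1)^2 + (l3 - 1)^2) ∧
    W !![-1, 0, 0; 0, -1, 0; 0, 0, 1] = (l1 + 1)^2 + (l2 + 1)^2 + (l3 - 1)^2 := by
  constructor
  · intro R hR hdet
    have hR' : R * Rᵀ = 1 := mul_eq_one_comm.mp hR
    have r1 : R 0 0 ^ 2 + R 0 1 ^ 2 + R 0 2 ^ 2 = 1 := by
      have h := congrFun (congrFun hR' 0) 0
      simp [Matrix.mul_apply, Fin.sum_univ_succ, Matrix.one_apply] at h
      linear_combination h
    have r2 : R 1 0 ^ 2 + R 1 1 ^ 2 + R 1 2 ^ 2 = 1 := by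
      have h := congrFun (congrFun hR' 1) 1
      simp [Matrix.mul_apply, Fin.sum_univ_succ, Matrix.one_apply] at h
      linear_combination h
    have r3 : R 2 0 ^ 2 + R 2 1 ^ 2 + R 2 2 ^ 2 = 1 := by
      have h := congrFun (congrFun hR' 2) 2
      simp [Matrix.mul_apply, Fin.sum_univ_succ, Matrix.one_apply] at h
      linear_combination h
    have hadj : R.adjugate = Rᵀ := by
      have h1 : R.adjugate * R = 1 := by rw [Matrix.adjugate_mul, hdet, one_smul]
      calc R.adjugate = R.adjugate * (R * Rᵀ) := by rw [hR', mul_one]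
        _ = (R.adjugate * R) * Rᵀ := by rw [mul_assoc]
        _ = Rᵀ := by rw [h1, one_mul]
    have c1 : R 1 1 * R 2 2 - R 1 2 * R 2 1 = R 0 0 := by
      have := congrFun (congrFun hadj 0) 0
      rw [Matrix.adjugate_fin_three] at this
      simpa using this
    have c2 : R 0 0 * R 2 2 - R 0 2 * R 2 0 = R 1 1 := by
      have := congrFun (congrFun hadj 1) 1
      rw [Matrix.adjugate_fin_three] at this
      simpa using this
    have c3 : R 0 0 * R 1 1 - R 0 1 * R 1 0 = R 2 2 := by
      have := congrFun (congrFun hadj 2) 2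
      rw [Matrix.adjugate_fin_three] at this
      simpa using this
    have hid : (1 + (R 0 0 + R 1 1 + R 2 2))^2 + (R 2 1 - R 1 2)^2
        + (R 0 2 - R 2 0)^2 + (R 1 0 - R 0 1)^2
        = 4 * (1 + (R 0 0 + R 1 1 + R 2 2)) := by
      linear_combination r1 + r2 + r3 + 2*c1 + 2*c2 + 2*c3
    have htr : R 0 0 + R 1 1 + R 2 2 ≥ -1 := by
      nlinarith [sq_nonneg (1 + (R 0 0 + R 1 1 + R 2 2)), sq_nonneg (R 2 1 - R 1 2),
        sq_nonneg (R 0 2 - R 2 0), sq_nonneg (R 1 0 - R 0 1)]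
    have ha : R 0 0 ≥ -1 := by
      nlinarith [sq_nonneg (R 0 1), sq_nonneg (R 0 2), sq_nonneg (1 + R 0 0)]
    have hi : R 2 2 ≤ 1 := by
      nlinarith [sq_nonneg (R 2 0), sq_nonneg (R 2 1), sq_nonneg (1 - R 2 2)]
    have hl2 : (0:ℝ) ≤ l2 := le_trans h3.le h23
    have hB : l1 * R 0 0 + l2 * R 1 1 + l3 * R 2 2 ≥ -(l1 + l2 - l3) := by
      have p1 : (0:ℝ) ≤ (l1 - l2) * (R 0 0 + 1) :=
        mul_nonneg (sub_nonneg.2 h12) (by linarith)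
      have p2 : (0:ℝ) ≤ (l2 - l3) * (1 - R 2 2) :=
        mul_nonneg (sub_nonneg.2 h23) (by linarith)
      have p3 : (0:ℝ) ≤ l2 * (1 + (R 0 0 + R 1 1 + R 2 2)) :=
        mul_nonneg hl2 (by linarith)
      linarith [p1, p2, p3]
    have e1 : l1^2 * (R 0 0 ^ 2 + R 0 1 ^ 2 + R 0 2 ^ 2) = l1^2 := by rw [r1]; ring
    have e2 : l2^2 * (R 1 0 ^ 2 + R 1 1 ^ 2 + R 1 2 ^ 2) = l2^2 := by rw [r2]; ring
    have e3 : l3^2 * (R 2 0 ^ 2 + R 2 1 ^ 2 + R 2 2 ^ 2) = l3^2 := by rw [r3]; ring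
    have hWval : W R = (1/2)*(l1^2*(R 0 0^2 + R 0 1^2 + R 0 2^2)
          + l2^2*(R 1 0^2 + R 1 1^2 + R 1 2^2) + l3^2*(R 2 0^2 + R 2 1^2 + R 2 2^2))
        + (1/2)*(l1^2*(R 0 0)^2 + l2^2*(R 1 1)^2 + l3^2*(R 2 2)^2
          + 2*l1*l2*(R 0 1)*(R 1 0) + 2*l1*l3*(R 0 2)*(R 2 0) + 2*l2*l3*(R 1 2)*(R 2 1))
        - 2*(l1*(R 0 0) + l2*(R 1 1) + l3*(R 2 2)) + 3 := by
      rw [hW]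
      simp [Matrix.trace_fin_three, Matrix.mul_apply, Fin.sum_univ_succ, Matrix.one_apply]
      ring
    rw [hWval]
    linarith [hB, e1, e2, e3, sq_nonneg (R 0 1 * l1 - R 1 0 * l2),
      sq_nonneg (R 0 2 * l1 - R 2 0 * l3), sq_nonneg (R 1 2 * l2 - R 2 1 * l3)]
  · rw [hW]
    simp [Matrix.trace_fin_three, Matrix.mul_apply, Fin.sum_univ_succ, Matrix.one_apply]
    ring
end

section
/- (SO(3) global minimum, case λ₁+λ₂ ≤ 2) Let λ₁ ≥ λ₂ ≥ λ₃ > 0 with λ₁+λ₂ ≤ 2 and D = diag(λ₁,λ₂,λ₃). Then for every R ∈ SO(3), ‖sym(RᵀD − I)‖² ≥ (λ₁−1)² + (λ₂−1)² + (λ₃−1)², i.e. R = I is a global minimizer. -/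
open Matrix

lemma so3_trace_aux (a b c d e f g h i : ℝ)
    (h1 : a^2 + b^2 + c^2 = 1) (h2 : d^2 + e^2 + f^2 = 1) (h3 : g^2 + h^2 + i^2 = 1)
    (c1 : e*i - f*h = a) (c2 : a*i - c*g = e) (c3 : a*e - b*d = i) :
    0 ≤ 1 + a + e + i := by
  nlinarith [sq_nonneg (1 + a + e + i), sq_nonneg (f - h), sq_nonneg (c - g), sq_nonneg (b - d)]

set_option maxHeartbeats 2000000 in
theorem stmt17 (l1 l2 l3 : ℝ) (h12 : l1 ≥ l2) (h23 : l2 ≥ l3) (h3 : l3 > 0)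
    (hsum : l1 + l2 ≤ 2)
    (W : Matrix (Fin 3) (Fin 3) ℝ → ℝ)
    (hW : W = fun R =>
      Matrix.trace (((1/2 : ℝ) • ((Rᵀ * !![l1, 0, 0; 0, l2, 0; 0, 0, l3] - 1)
          + (Rᵀ * !![l1, 0, 0; 0, l2, 0; 0, 0, l3] - 1)ᵀ))ᵀ *
        ((1/2 : ℝ) • ((Rᵀ * !![l1, 0, 0; 0, l2, 0; 0, 0, l3] - 1)
          + (Rᵀ * !![l1, 0, 0; 0, l2, 0; 0, 0, l3] - 1)ᵀ)))) :
    ∀ R : Matrix (Fin 3) (Fin 3) ℝ, Rᵀ * R = 1 → R.det = 1 →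
      (l1 - 1)^2 + (l2 - 1)^2 + (l3 - 1)^2 ≤ W R := by
  intro R hR hdet
  have hR2 : R * Rᵀ = 1 := mul_eq_one_comm.mp hR
  have hadj : adjugate R = Rᵀ := by
    have h1 : R * adjugate R = 1 := by rw [Matrix.mul_adjugate, hdet, one_smul]
    calc adjugate R = (Rᵀ * R) * adjugate R := by rw [hR, one_mul]
      _ = Rᵀ * (R * adjugate R) := by rw [Matrix.mul_assoc]
      _ = Rᵀ := by rw [h1, mul_one]
  -- row norm equations
  have ent : ∀ i j, (R * Rᵀ) i j = (1 : Matrix (Fin 3) (Fin 3) ℝ) i j := fun i j => by rw [hR2]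
  have he1 : R 0 0 ^ 2 + R 0 1 ^ 2 + R 0 2 ^ 2 = 1 := by
    have := ent 0 0
    simpa [Matrix.mul_apply, Fin.sum_univ_three, Matrix.one_apply, sq] using this
  have he2 : R 1 0 ^ 2 + R 1 1 ^ 2 + R 1 2 ^ 2 = 1 := by
    have := ent 1 1
    simpa [Matrix.mul_apply, Fin.sum_univ_three, Matrix.one_apply, sq] using this
  have he3 : R 2 0 ^ 2 + R 2 1 ^ 2 + R 2 2 ^ 2 = 1 := by
    have := ent 2 2
    simpa [Matrix.mul_apply, Fin.sum_univ_three, Matrix.one_apply, sq] using this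
  -- cofactor equations
  have hae : ∀ i j, adjugate R i j = Rᵀ i j := fun i j => by rw [hadj]
  have hc1 : R 1 1 * R 2 2 - R 1 2 * R 2 1 = R 0 0 := by
    have := hae 0 0
    rw [Matrix.adjugate_fin_three] at this
    simpa using this
  have hc2 : R 0 0 * R 2 2 - R 0 2 * R 2 0 = R 1 1 := by
    have := hae 1 1
    rw [Matrix.adjugate_fin_three] at this
    simpa using this
  have hc3 : R 0 0 * R 1 1 - R 0 1 * R 1 0 = R 2 2 := by
    have := hae 2 2
    rw [Matrix.adjugate_fin_three] at this
    simpa using this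
  -- bounds on diagonal
  have hb1 : R 0 0 ≤ 1 := by nlinarith [sq_nonneg (R 0 1), sq_nonneg (R 0 2), sq_nonneg (1 - R 0 0)]
  have hb2 : R 1 1 ≤ 1 := by nlinarith [sq_nonneg (R 1 0), sq_nonneg (R 1 2), sq_nonneg (1 - R 1 1)]
  have hb3 : R 2 2 ≤ 1 := by nlinarith [sq_nonneg (R 2 0), sq_nonneg (R 2 2), sq_nonneg (1 - R 2 2)]
  -- Horn inequality : 1 + R00 - R11 - R22 ≥ 0
  have hhorn : 0 ≤ 1 + R 0 0 - R 1 1 - R 2 2 := by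
    have := so3_trace_aux (R 0 0) (R 0 1) (R 0 2) (-(R 1 0)) (-(R 1 1)) (-(R 1 2))
      (-(R 2 0)) (-(R 2 1)) (-(R 2 2))
      (by linarith) (by linear_combination he2) (by linear_combination he3)
      (by linear_combination hc1) (by linear_combination -hc2) (by linear_combination -hc3)
    linarith
  -- key algebraic identity
  have key : W R = (l1 - 1)^2 + (l2 - 1)^2 + (l3 - 1)^2
      + (1/2) * (l1*(1 - R 0 0) + l2*(1 - R 1 1) + l3*(1 - R 2 2))^2
      + (l1*(2 - l1 - l2)) * (1 - R 0 0)
      + (l2*(2 - l1 - l2)) * (1 - R 1 1)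
      + (l3*(2 - l1 - l2) + (l1 + l3)*(l2 - l3)) * (1 - R 2 2)
      + (l3*(l1 - l2)) * ((1 - R 1 1) + (1 - R 2 2) - (1 - R 0 0)) := by
    have hDt : (!![l1, 0, 0; 0, l2, 0; 0, 0, l3] : Matrix (Fin 3) (Fin 3) ℝ)ᵀ
        = !![l1, 0, 0; 0, l2, 0; 0, 0, l3] := by
      ext i j; fin_cases i <;> fin_cases j <;> rfl
    rw [hW]
    simp only [Matrix.transpose_add, Matrix.transpose_sub, Matrix.transpose_mul,
      Matrix.transpose_transpose, Matrix.transpose_one, hDt, Matrix.transpose_smul,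
      Matrix.smul_mul, Matrix.mul_smul, Matrix.trace_smul, smul_eq_mul]
    rw [Matrix.trace_fin_three]
    simp [Matrix.mul_apply, Fin.sum_univ_three, Matrix.one_apply, Matrix.vecMul,
      Matrix.vecHead, Matrix.vecTail, dotProduct, Function.comp]
    linear_combination (l1^2/2) * he1 + (l2^2/2) * he2 + (l3^2/2) * he3
      - l2*l3 * hc1 - l1*l3 * hc2 - l1*l2 * hc3
  rw [key]
  have h2pos : 0 < l2 := lt_of_lt_of_le h3 h23
  have h1pos : 0 < l1 := lt_of_lt_of_le h2pos h12
  have t1 : 0 ≤ (1/2) * (l1*(1 - R 0 0) + l2*(1 - R 1 1) + l3*(1 - R 2 2))^2 := by positivity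
  have t2 : 0 ≤ (l1*(2 - l1 - l2)) * (1 - R 0 0) :=
    mul_nonneg (mul_nonneg h1pos.le (by linarith)) (by linarith)
  have t3 : 0 ≤ (l2*(2 - l1 - l2)) * (1 - R 1 1) :=
    mul_nonneg (mul_nonneg h2pos.le (by linarith)) (by linarith)
  have t4 : 0 ≤ (l3*(2 - l1 - l2) + (l1 + l3)*(l2 - l3)) * (1 - R 2 2) := by
    apply mul_nonneg
    · have : 0 ≤ l3*(2 - l1 - l2) := mul_nonneg h3.le (by linarith)
      nlinarith
    · linarith
  have t5 : 0 ≤ (l3*(l1 - l2)) * ((1 - R 1 1) + (1 - R 2 2) - (1 - R 0 0)) :=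
    mul_nonneg (mul_nonneg h3.le (by linarith)) (by linarith)
  linarith
end

section
/- (SO(3) global minimum, case λ₁+λ₂ > 2) Let λ₁ ≥ λ₂ ≥ λ₃ > 0 with λ₁+λ₂ > 2 and D = diag(λ₁,λ₂,λ₃). Then for every R ∈ SO(3), ‖sym(RᵀD − I)‖² ≥ (λ₃−1)² + (1/2)(λ₁−λ₂)², and equality is attained by the block-diagonal rotation R₀ = [[c, −s, 0],[s, c, 0],[0,0,1]] with c = 2/(λ₁+λ₂), s = √(1−c²). -/
open Matrix

set_option maxHeartbeats 2000000 in
theorem stmt18 (l1 l2 l3 : ℝ) (h12 : l1 ≥ l2) (h23 : l2 ≥ l3) (h3 : l3 > 0)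
    (hsum : l1 + l2 > 2)
    (c s : ℝ) (hc : c = 2 / (l1 + l2)) (hs : s = Real.sqrt (1 - c^2))
    (W : Matrix (Fin 3) (Fin 3) ℝ → ℝ)
    (hW : W = fun R =>
      Matrix.trace (((1/2 : ℝ) • ((Rᵀ * !![l1, 0, 0; 0, l2, 0; 0, 0, l3] - 1)
          + (Rᵀ * !![l1, 0, 0; 0, l2, 0; 0, 0, l3] - 1)ᵀ))ᵀ *
        ((1/2 : ℝ) • ((Rᵀ * !![l1, 0, 0; 0, l2, 0; 0, 0, l3] - 1)
          + (Rᵀ * !![l1, 0, 0; 0, l2, 0; 0, 0, l3] - 1)ᵀ)))) :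
    (∀ R : Matrix (Fin 3) (Fin 3) ℝ, Rᵀ * R = 1 → R.det = 1 →
      (l3 - 1)^2 + (1/2) * (l1 - l2)^2 ≤ W R) ∧
    W !![c, -s, 0; s, c, 0; 0, 0, 1] = (l3 - 1)^2 + (1/2) * (l1 - l2)^2 := by
  have hlp : (0:ℝ) < l1 + l2 := by linarith
  have hc1 : c * (l1 + l2) = 2 := by rw [hc]; field_simp
  have hcle : c ≤ 1 := by rw [hc]; rw [div_le_one hlp]; linarith
  have hc0 : 0 < c := by rw [hc]; positivity
  have hs2 : s^2 = 1 - c^2 := by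
    rw [hs, Real.sq_sqrt]; nlinarith
  constructor
  · intro R hR hdet
    have hR' : R * Rᵀ = 1 := mul_eq_one_comm.mp hR
    have A1 : R 0 0 ^ 2 + R 0 1 ^ 2 + R 0 2 ^ 2 = 1 := by
      have h := congrFun (congrFun hR' 0) 0
      simpa [Matrix.mul_apply, Fin.sum_univ_three, Matrix.one_apply, sq] using h
    have A2 : R 1 0 ^ 2 + R 1 1 ^ 2 + R 1 2 ^ 2 = 1 := by
      have h := congrFun (congrFun hR' 1) 1
      simpa [Matrix.mul_apply, Fin.sum_univ_three, Matrix.one_apply, sq] using h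
    have A3 : R 2 0 ^ 2 + R 2 1 ^ 2 + R 2 2 ^ 2 = 1 := by
      have h := congrFun (congrFun hR' 2) 2
      simpa [Matrix.mul_apply, Fin.sum_univ_three, Matrix.one_apply, sq] using h
    have hadj : adjugate R = Rᵀ := by
      have h1 : adjugate R * R = 1 := by rw [Matrix.adjugate_mul, hdet, one_smul]
      calc adjugate R = adjugate R * (R * Rᵀ) := by rw [hR', Matrix.mul_one]
        _ = adjugate R * R * Rᵀ := by rw [Matrix.mul_assoc]
        _ = Rᵀ := by rw [h1, Matrix.one_mul]
    rw [Matrix.adjugate_fin_three] at hadj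
    have e1 : R 1 1 * R 2 2 - R 1 2 * R 2 1 = R 0 0 := by
      have h := congrFun (congrFun hadj 0) 0
      simpa using h
    have e2 : R 0 0 * R 2 2 - R 0 2 * R 2 0 = R 1 1 := by
      have h := congrFun (congrFun hadj 1) 1
      simpa using h
    have e3 : R 0 0 * R 1 1 - R 0 1 * R 1 0 = R 2 2 := by
      have h := congrFun (congrFun hadj 2) 2
      simpa using h
    have k2 : (1 + R 0 0 - R 1 1 - R 2 2)^2 + (R 1 2 - R 2 1)^2 + (R 0 2 + R 2 0)^2
        + (R 0 1 + R 1 0)^2 = 4 * (1 + R 0 0 - R 1 1 - R 2 2) := by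
      linear_combination A1 + A2 + A3 + 2*e1 - 2*e2 - 2*e3
    have hq2 : 0 ≤ 1 + R 0 0 - R 1 1 - R 2 2 := by
      nlinarith [k2, sq_nonneg (1 + R 0 0 - R 1 1 - R 2 2), sq_nonneg (R 1 2 - R 2 1),
        sq_nonneg (R 0 2 + R 2 0), sq_nonneg (R 0 1 + R 1 0)]
    have k1 : (1 - R 0 0 + R 1 1 - R 2 2)^2 + (R 1 2 + R 2 1)^2 + (R 0 2 - R 2 0)^2
        + (R 0 1 + R 1 0)^2 = 4 * (1 - R 0 0 + R 1 1 - R 2 2) := by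
      linear_combination A1 + A2 + A3 - 2*e1 + 2*e2 - 2*e3
    have hq1 : 0 ≤ 1 - R 0 0 + R 1 1 - R 2 2 := by
      nlinarith [k1, sq_nonneg (1 - R 0 0 + R 1 1 - R 2 2), sq_nonneg (R 1 2 + R 2 1),
        sq_nonneg (R 0 2 - R 2 0), sq_nonneg (R 0 1 + R 1 0)]
    have hWR : W R = (l1 * R 0 0 - 1)^2 + (l2 * R 1 1 - 1)^2 + (l3 * R 2 2 - 1)^2
        + (1/2) * ((l1 * R 0 1 + l2 * R 1 0)^2 + (l1 * R 0 2 + l3 * R 2 0)^2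
          + (l2 * R 1 2 + l3 * R 2 1)^2) := by
      rw [hW]
      simp [Matrix.trace_fin_three, Matrix.mul_apply, Fin.sum_univ_three,
        Matrix.one_apply, Matrix.vecHead, Matrix.vecTail]
      ring
    have main : W R - ((l3 - 1)^2 + (1/2) * (l1 - l2)^2)
        = (1/2) * (l1 * R 0 0 + l2 * R 1 1 + l3 * R 2 2 - 2 - l3)^2
          + (1/2) * ((l1 - l3) * (l2 + l3)) * (1 + R 0 0 - R 1 1 - R 2 2)
          + (1/2) * ((l2 - l3) * (l1 + l3)) * (1 - R 0 0 + R 1 1 - R 2 2) := by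
      rw [hWR]
      linear_combination (l1^2/2) * A1 + (l2^2/2) * A2 + (l3^2/2) * A3
        - (l2*l3) * e1 - (l1*l3) * e2 - (l1*l2) * e3
    have hC2 : 0 ≤ (l1 - l3) * (l2 + l3) * (1 + R 0 0 - R 1 1 - R 2 2) :=
      mul_nonneg (mul_nonneg (by linarith) (by linarith)) hq2
    have hC1 : 0 ≤ (l2 - l3) * (l1 + l3) * (1 - R 0 0 + R 1 1 - R 2 2) :=
      mul_nonneg (mul_nonneg (by linarith) (by linarith)) hq1
    linarith [main, hC1, hC2, sq_nonneg (l1 * R 0 0 + l2 * R 1 1 + l3 * R 2 2 - 2 - l3)]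
  · rw [hW]
    simp [Matrix.trace_fin_three, Matrix.mul_apply, Fin.sum_univ_three,
      Matrix.one_apply, Matrix.vecHead, Matrix.vecTail]
    linear_combination ((l1-l2)^2/2) * hs2 + ((c*(l1+l2)-2)/2) * hc1
end

section
/- (Isotropic case λ₁=λ₂=λ₃=λ ≤ 1) Let λ ∈ (0,1] and D = λI₃. Then for every R ∈ SO(3), ‖sym(λ Rᵀ − I)‖² ≥ 3(λ−1)², with equality iff R = I. -/
set_option maxHeartbeats 1000000


open Matrix

theorem stmt19 (l : ℝ) (hl : l ∈ Set.Ioc (0 : ℝ) 1)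
    (W : Matrix (Fin 3) (Fin 3) ℝ → ℝ)
    (hW : W = fun R =>
      Matrix.trace (((1/2 : ℝ) • ((l • Rᵀ - 1) + (l • Rᵀ - 1)ᵀ))ᵀ *
        ((1/2 : ℝ) • ((l • Rᵀ - 1) + (l • Rᵀ - 1)ᵀ)))) :
    ∀ R : Matrix (Fin 3) (Fin 3) ℝ, Rᵀ * R = 1 → R.det = 1 →
      3 * (l - 1)^2 ≤ W R ∧ (W R = 3 * (l - 1)^2 ↔ R = 1) := by
  obtain ⟨hl0, hl1⟩ := hl
  intro R h1 hdet
  have h2 : R * Rᵀ = 1 := mul_eq_one_comm.mp h1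
  have hadj : R.adjugate = Rᵀ := by
    calc R.adjugate = R.adjugate * (R * Rᵀ) := by rw [h2, mul_one]
    _ = (R.adjugate * R) * Rᵀ := by rw [mul_assoc]
    _ = Rᵀ := by rw [Matrix.adjugate_mul, hdet, one_smul, one_mul]
  have col : ∀ i j : Fin 3, R 0 i * R 0 j + R 1 i * R 1 j + R 2 i * R 2 j
      = if i = j then 1 else 0 := by
    intro i j
    have := congrFun (congrFun h1 i) j
    simpa [Matrix.mul_apply, Fin.sum_univ_three, Matrix.one_apply] using this
  have c0 : R 0 0 * R 0 0 + R 1 0 * R 1 0 + R 2 0 * R 2 0 = 1 := by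
    simpa using col 0 0
  have c1 : R 0 1 * R 0 1 + R 1 1 * R 1 1 + R 2 1 * R 2 1 = 1 := by
    simpa using col 1 1
  have c2 : R 0 2 * R 0 2 + R 1 2 * R 1 2 + R 2 2 * R 2 2 = 1 := by
    simpa using col 2 2
  have hc0 : R 1 1 * R 2 2 - R 1 2 * R 2 1 = R 0 0 := by
    have := congrFun (congrFun hadj 0) 0
    simpa [Matrix.adjugate_fin_three] using this
  have hc1 : R 0 0 * R 2 2 - R 0 2 * R 2 0 = R 1 1 := by
    have := congrFun (congrFun hadj 1) 1
    simpa [Matrix.adjugate_fin_three] using this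
  have hc2 : R 0 0 * R 1 1 - R 0 1 * R 1 0 = R 2 2 := by
    have := congrFun (congrFun hadj 2) 2
    simpa [Matrix.adjugate_fin_three] using this
  have hd0 : R 0 0 ≤ 1 := by
    nlinarith [sq_nonneg (R 1 0), sq_nonneg (R 2 0), sq_nonneg (R 0 0 - 1)]
  have hd1 : R 1 1 ≤ 1 := by
    nlinarith [sq_nonneg (R 0 1), sq_nonneg (R 2 1), sq_nonneg (R 1 1 - 1)]
  have hd2 : R 2 2 ≤ 1 := by
    nlinarith [sq_nonneg (R 0 2), sq_nonneg (R 1 2), sq_nonneg (R 2 2 - 1)]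
  set t := R 0 0 + R 1 1 + R 2 2 with ht
  have ht3 : t ≤ 3 := by rw [ht]; linarith
  have hWR : W R = 3 * (l - 1)^2 + (l/2) * ((3 - t) * (4 - l * (t + 1))) := by
    rw [hW]
    simp only [Matrix.trace_fin_three, Matrix.mul_apply, Fin.sum_univ_three,
      Matrix.transpose_apply, Matrix.smul_apply, Matrix.add_apply, Matrix.sub_apply,
      Matrix.one_apply, smul_eq_mul, ht]
    norm_num [Fin.ext_iff]
    linear_combination (l^2/2) * c0 + (l^2/2) * c1 + (l^2/2) * c2
      - l^2 * hc0 - l^2 * hc1 - l^2 * hc2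
  have h4 : 0 ≤ 4 - l * (t + 1) := by
    rcases le_or_gt (t + 1) 0 with h | h
    · nlinarith [mul_nonpos_of_nonneg_of_nonpos hl0.le h]
    · nlinarith [mul_le_mul_of_nonneg_right hl1 h.le]
  have hfac : 0 ≤ (3 - t) * (4 - l * (t + 1)) := mul_nonneg (by linarith) h4
  constructor
  · rw [hWR]
    have := mul_nonneg (by positivity : (0:ℝ) ≤ l / 2) hfac
    linarith
  constructor
  · intro hEq
    have hprod : (3 - t) * (4 - l * (t + 1)) = 0 := by
      have h' : (l/2) * ((3 - t) * (4 - l * (t + 1))) = 0 := by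
        rw [hWR] at hEq; linarith
      have : (l/2) ≠ 0 := by positivity
      exact (mul_eq_zero.mp h').resolve_left this
    have ht3' : t = 3 := by
      by_contra hne
      have hlt : t < 3 := lt_of_le_of_ne ht3 hne
      have hpos : 0 < 4 - l * (t + 1) := by
        rcases le_or_gt (t + 1) 0 with h | h
        · nlinarith [mul_nonpos_of_nonneg_of_nonpos hl0.le h]
        · nlinarith [mul_le_mul_of_nonneg_right hl1 h.le]
      nlinarith
    have e00 : R 0 0 = 1 := by rw [ht] at ht3'; linarith
    have e11 : R 1 1 = 1 := by rw [ht] at ht3'; linarith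
    have e22 : R 2 2 = 1 := by rw [ht] at ht3'; linarith
    clear hWR hprod hEq hfac h4 hadj col hW h1 h2
    have sq0 : ∀ x : ℝ, x ^ 2 ≤ 0 → x = 0 := fun x h =>
      pow_eq_zero_iff (n := 2) (by norm_num) |>.mp (le_antisymm h (sq_nonneg x))
    have z10 : R 1 0 = 0 := by apply sq0; nlinarith [sq_nonneg (R 2 0)]
    have z20 : R 2 0 = 0 := by apply sq0; nlinarith [sq_nonneg (R 1 0)]
    have z01 : R 0 1 = 0 := by apply sq0; nlinarith [sq_nonneg (R 2 1)]
    have z21 : R 2 1 = 0 := by apply sq0; nlinarith [sq_nonneg (R 0 1)]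
    have z02 : R 0 2 = 0 := by apply sq0; nlinarith [sq_nonneg (R 1 2)]
    have z12 : R 1 2 = 0 := by apply sq0; nlinarith [sq_nonneg (R 0 2)]
    ext i j
    fin_cases i <;> fin_cases j <;>
      simp [e00, e11, e22, z10, z20, z01, z21, z02, z12, Matrix.one_apply]
  · rintro rfl
    rw [hW]
    simp [Matrix.trace_fin_three, Matrix.mul_apply, Fin.sum_univ_three,
      Matrix.transpose_apply, Matrix.smul_apply, Matrix.add_apply, Matrix.sub_apply,
      Matrix.one_apply, smul_eq_mul]
    ring
end
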